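/- Fix positive integers N, D and k, and let A be an N × N real matrix that is symmetric, has zero diagonal, and every entry equal to 0 or 1 (the adjacency matrix of a simple graph on N vertices). Let Ã = A + I. Let μ be the product probability measure on functions Fin N × Fin D → ℝ in which every coordinate is an independent standard real Gaussian gaussianReal 0 1, and for a sample x let X(x) denote the corresponding N × D real matrix. Define H^{(k)}(x) = Ã^k · X(x). Then the expected squared Frobenius norm ∫ ‖H^{(k)}(x) · H^{(k)}(x)ᵀ‖_F² dμ(x) equals D · Σ_{i,j=1}^{N} [ (D+1) · ((Ã^{2k})_{ij})² + (Ã^{2k})_{ii} · (Ã^{2k})_{jj} ]. -/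

import Mathlib

open MeasureTheory ProbabilityTheory Matrix

/-- Squared Frobenius norm of a real matrix: `‖M‖_F² = Σ_{i,j} M_{ij}²`. -/
noncomputable def frobSq {m n : Type*} [Fintype m] [Fintype n]
    (M : Matrix m n ℝ) : ℝ :=
  ∑ i, ∑ j, (M i j) ^ 2

namespace GCNAux
open Real
open scoped ENNReal NNReal

/-! ### Moments of the standard Gaussian -/

lemma int_pow_exp (n : ℕ) :
    Integrable (fun x : ℝ => x ^ n * rexp (-(2⁻¹ : ℝ) * x ^ 2)) := by
  have hs : (-1 : ℝ) < (n : ℝ) := lt_of_lt_of_le (by norm_num) (Nat.cast_nonneg n)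
  have h := integrable_rpow_mul_exp_neg_mul_sq (b := (2⁻¹ : ℝ)) (by norm_num) hs
  simpa [Real.rpow_natCast] using h

lemma J_zero : (∫ x : ℝ, x ^ 0 * rexp (-(2⁻¹ : ℝ) * x ^ 2)) = √2 * √π := by
  have := integral_gaussian (2⁻¹ : ℝ)
  simp only [pow_zero, one_mul]
  rw [this, show (π / 2⁻¹ : ℝ) = 2 * π by ring, Real.sqrt_mul (by norm_num : (0:ℝ) ≤ 2)]

lemma hasDerivAt_v (x : ℝ) :
    HasDerivAt (fun y : ℝ => rexp (-(2⁻¹ : ℝ) * y ^ 2)) (rexp (-(2⁻¹ : ℝ) * x ^ 2) * (-x)) x := by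
  have h : HasDerivAt (fun y : ℝ => -(2⁻¹ : ℝ) * y ^ 2) (-x) x := by
    simpa using ((hasDerivAt_pow 2 x).const_mul (-(2⁻¹ : ℝ)))
  simpa using h.exp

lemma J_one : (∫ x : ℝ, x ^ 1 * rexp (-(2⁻¹ : ℝ) * x ^ 2)) = 0 := by
  have hu : ∀ x : ℝ, HasDerivAt (fun _ : ℝ => (1 : ℝ)) 0 x := fun x => hasDerivAt_const x 1
  have h1 : Integrable ((fun _ : ℝ => (1:ℝ)) * fun x => rexp (-(2⁻¹ : ℝ) * x ^ 2) * (-x)) := by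
    have := (int_pow_exp 1).neg
    refine this.congr (by filter_upwards with x; simp [Pi.mul_apply]; ring)
  have h2 : Integrable ((fun _ : ℝ => (0:ℝ)) * fun x => rexp (-(2⁻¹ : ℝ) * x ^ 2)) := by
    have e : ((fun _ : ℝ => (0:ℝ)) * fun x => rexp (-(2⁻¹ : ℝ) * x ^ 2)) = fun _ => (0:ℝ) := by
      funext x; simp
    rw [e]; exact integrable_zero _ _ _
  have h3 : Integrable ((fun _ : ℝ => (1:ℝ)) * fun x => rexp (-(2⁻¹ : ℝ) * x ^ 2)) := by
    have := int_pow_exp 0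
    refine this.congr (by filter_upwards with x; simp [Pi.mul_apply])
  have h := integral_mul_deriv_eq_deriv_mul_of_integrable (fun x _ => hu x) (fun x _ => hasDerivAt_v x) h1 h2 h3
  simp only [one_mul, zero_mul, integral_zero, neg_zero] at h
  have h2' : (∫ x : ℝ, rexp (-(2⁻¹:ℝ) * x ^ 2) * (-x)) = -∫ x : ℝ, x ^ 1 * rexp (-(2⁻¹:ℝ) * x ^ 2) := by
    rw [← integral_neg]; congr 1; ext x; ring
  rw [h2'] at h
  linarith

lemma J_rec (n : ℕ) : (∫ x : ℝ, x ^ (n+2) * rexp (-(2⁻¹ : ℝ) * x ^ 2))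
    = (n+1 : ℝ) * ∫ x : ℝ, x ^ n * rexp (-(2⁻¹ : ℝ) * x ^ 2) := by
  have hu : ∀ x : ℝ, HasDerivAt (fun y : ℝ => y ^ (n+1)) ((n+1 : ℝ) * x ^ n) x := by
    intro x; simpa using hasDerivAt_pow (n+1) x
  have h1 : Integrable ((fun y : ℝ => y ^ (n+1)) * fun x => rexp (-(2⁻¹ : ℝ) * x ^ 2) * (-x)) := by
    refine (int_pow_exp (n+2)).neg.congr (by filter_upwards with x; simp [Pi.mul_apply]; ring)
  have h2 : Integrable ((fun x : ℝ => (n+1 : ℝ) * x ^ n) * fun x => rexp (-(2⁻¹ : ℝ) * x ^ 2)) := by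
    refine ((int_pow_exp n).const_mul (n+1 : ℝ)).congr (by filter_upwards with x; simp [Pi.mul_apply]; ring)
  have h3 : Integrable ((fun y : ℝ => y ^ (n+1)) * fun x => rexp (-(2⁻¹ : ℝ) * x ^ 2)) := by
    refine (int_pow_exp (n+1)).congr (by filter_upwards with x; simp [Pi.mul_apply])
  have h := integral_mul_deriv_eq_deriv_mul_of_integrable (fun x _ => hu x) (fun x _ => hasDerivAt_v x) h1 h2 h3
  have e1 : (∫ x : ℝ, x ^ (n+1) * (rexp (-(2⁻¹:ℝ) * x ^ 2) * (-x)))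
      = -∫ x : ℝ, x ^ (n+2) * rexp (-(2⁻¹:ℝ) * x ^ 2) := by
    rw [← integral_neg]; congr 1; ext x; ring
  have e2 : (∫ x : ℝ, (n+1 : ℝ) * x ^ n * rexp (-(2⁻¹:ℝ) * x ^ 2))
      = (n+1 : ℝ) * ∫ x : ℝ, x ^ n * rexp (-(2⁻¹:ℝ) * x ^ 2) := by
    rw [← integral_const_mul]; congr 1; ext x; ring
  rw [e1, e2] at h
  linarith

lemma pdf01 (t : ℝ) :
    gaussianPDFReal 0 1 t = (√2 * √π)⁻¹ * rexp (-(2⁻¹ : ℝ) * t ^ 2) := by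
  simp only [gaussianPDFReal, NNReal.coe_one, mul_one, sub_zero]
  rw [Real.sqrt_mul (by norm_num : (0:ℝ) ≤ 2), show (-t^2/2 : ℝ) = -(2⁻¹:ℝ) * t^2 by ring]

lemma gauss_eq_wd : gaussianReal 0 1
    = (volume : Measure ℝ).withDensity (fun t => ((gaussianPDFReal 0 1 t).toNNReal : ℝ≥0∞)) := by
  rw [gaussianReal_of_var_ne_zero 0 one_ne_zero]
  rfl

lemma integral_gauss (f : ℝ → ℝ) :
    ∫ t, f t ∂(gaussianReal 0 1) = ∫ t, gaussianPDFReal 0 1 t * f t := by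
  rw [gauss_eq_wd, integral_withDensity_eq_integral_smul
    (measurable_gaussianPDFReal 0 1).real_toNNReal f]
  congr 1; funext t
  simp [NNReal.smul_def, Real.coe_toNNReal _ (gaussianPDFReal_nonneg 0 1 t)]

lemma integrable_gauss_iff (f : ℝ → ℝ) :
    Integrable f (gaussianReal 0 1) ↔ Integrable (fun t => gaussianPDFReal 0 1 t * f t) := by
  rw [gauss_eq_wd, integrable_withDensity_iff_integrable_coe_smul
    (measurable_gaussianPDFReal 0 1).real_toNNReal]
  constructor <;> intro h <;> refine h.congr (by
    filter_upwards with t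
    simp [NNReal.smul_def, Real.coe_toNNReal _ (gaussianPDFReal_nonneg 0 1 t)])

lemma integrable_pow_gauss (n : ℕ) :
    Integrable (fun t : ℝ => t ^ n) (gaussianReal 0 1) := by
  rw [integrable_gauss_iff]
  refine ((int_pow_exp n).const_mul ((√2 * √π)⁻¹)).congr ?_
  filter_upwards with t
  rw [pdf01]; ring

lemma gm_eq (n : ℕ) : (∫ t, t ^ n ∂(gaussianReal 0 1))
    = (√2 * √π)⁻¹ * ∫ x : ℝ, x ^ n * rexp (-(2⁻¹ : ℝ) * x ^ 2) := by
  rw [integral_gauss, ← integral_const_mul]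
  congr 1; funext t; rw [pdf01]; ring

lemma sqrt2pi_ne : (√2 * √π : ℝ) ≠ 0 := by positivity

lemma gm0 : (∫ t, t ^ 0 ∂(gaussianReal 0 1)) = (1:ℝ) := by
  rw [gm_eq, J_zero, inv_mul_cancel₀ sqrt2pi_ne]

lemma gm1 : (∫ t, t ^ 1 ∂(gaussianReal 0 1)) = (0:ℝ) := by
  rw [gm_eq, J_one, mul_zero]

lemma gm1' : (∫ t : ℝ, t ∂(gaussianReal 0 1)) = (0:ℝ) := by
  simpa using gm1

lemma gm2 : (∫ t, t ^ 2 ∂(gaussianReal 0 1)) = (1:ℝ) := by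
  rw [gm_eq, show (2:ℕ) = 0 + 2 from rfl, J_rec, J_zero]
  rw [show ((0:ℕ) + 1 : ℝ) = 1 by norm_num, one_mul, inv_mul_cancel₀ sqrt2pi_ne]

lemma gm3 : (∫ t, t ^ 3 ∂(gaussianReal 0 1)) = (0:ℝ) := by
  rw [gm_eq, show (3:ℕ) = 1 + 2 from rfl, J_rec, J_one, mul_zero, mul_zero]

lemma gm4 : (∫ t, t ^ 4 ∂(gaussianReal 0 1)) = (3:ℝ) := by
  rw [gm_eq, show (4:ℕ) = 2 + 2 from rfl, J_rec, J_rec 0, J_zero]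
  rw [show ((2:ℕ) + 1 : ℝ) = 3 by norm_num, show ((0:ℕ) + 1 : ℝ) = 1 by norm_num]
  field_simp

/-! ### Product measure tools -/

lemma integral_pi_prod {ι : Type*} [Fintype ι] (f : ι → ℝ → ℝ) :
    ∫ x : ι → ℝ, ∏ i, f i (x i) ∂(Measure.pi fun _ => gaussianReal 0 1)
      = ∏ i, ∫ t, f i t ∂(gaussianReal 0 1) := by
  letI : MeasureSpace ℝ := ⟨gaussianReal 0 1⟩
  haveI : SigmaFinite (volume : Measure ℝ) := inferInstanceAs (SigmaFinite (gaussianReal 0 1))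
  exact MeasureTheory.integral_fintype_prod_eq_prod f

lemma integrable_pi_prod {ι : Type*} [Fintype ι] (f : ι → ℝ → ℝ)
    (hf : ∀ i, Integrable (f i) (gaussianReal 0 1)) :
    Integrable (fun x : ι → ℝ => ∏ i, f i (x i)) (Measure.pi fun _ => gaussianReal 0 1) := by
  letI : MeasureSpace ℝ := ⟨gaussianReal 0 1⟩
  haveI : SigmaFinite (volume : Measure ℝ) := inferInstanceAs (SigmaFinite (gaussianReal 0 1))
  exact MeasureTheory.Integrable.fintype_prod hf

def kd {α : Type*} [DecidableEq α] (a b : α) : ℝ := if a = b then 1 else 0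

def cnt {ι : Type*} [DecidableEq ι] (p q r s i : ι) : ℕ :=
  (if i = p then 1 else 0) + ((if i = q then 1 else 0) +
    ((if i = r then 1 else 0) + (if i = s then 1 else 0)))

lemma monomial_eq_prod {ι : Type*} [Fintype ι] [DecidableEq ι] (p q r s : ι) (x : ι → ℝ) :
    x p * x q * (x r * x s) = ∏ i, (x i) ^ (cnt p q r s i) := by
  simp only [cnt, pow_add, Finset.prod_mul_distrib, pow_ite, pow_one, pow_zero,
    Finset.prod_ite_eq', Finset.mem_univ, if_true]
  ring

lemma integrable_four {ι : Type*} [Fintype ι] [DecidableEq ι] (p q r s : ι) :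
    Integrable (fun x : ι → ℝ => x p * x q * (x r * x s))
      (Measure.pi fun _ => gaussianReal 0 1) := by
  have h := integrable_pi_prod (fun i t => t ^ (cnt p q r s i))
    (fun i => integrable_pow_gauss _)
  refine h.congr ?_
  filter_upwards with x
  exact (monomial_eq_prod p q r s x).symm

lemma moment_four {ι : Type*} [Fintype ι] [DecidableEq ι] (p q r s : ι) :
    (∫ x : ι → ℝ, x p * x q * (x r * x s) ∂(Measure.pi fun _ => gaussianReal 0 1))
      = kd p q * kd r s + kd p r * kd q s + kd p s * kd q r := by
  have hrw : (fun x : ι → ℝ => x p * x q * (x r * x s))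
      = fun x => ∏ i, (x i) ^ (cnt p q r s i) := funext (monomial_eq_prod p q r s)
  rw [hrw, integral_pi_prod (fun i (t : ℝ) => t ^ (cnt p q r s i))]
  by_cases hpq : p = q
  · subst hpq
    by_cases hrs : r = s
    · subst hrs
      by_cases hpr : p = r
      · subst hpr
        have h : ∀ i, (∫ t, t ^ (cnt p p p p i) ∂(gaussianReal 0 1))
            = if i = p then (3:ℝ) else 1 := by
          intro i; by_cases h : i = p <;> simp [cnt, h, gm4, gm0]
        rw [Finset.prod_congr rfl (fun i _ => h i)]
        simp [kd, Finset.prod_ite_eq']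
        norm_num
      · have h : ∀ i, (∫ t, t ^ (cnt p p r r i) ∂(gaussianReal 0 1)) = 1 := by
          intro i
          by_cases h1 : i = p
          · simp [cnt, h1, hpr, gm2]
          · by_cases h2 : i = r <;> simp [cnt, h1, h2, Ne.symm hpr, gm2, gm0]
        rw [Finset.prod_congr rfl (fun i _ => h i), Finset.prod_const_one]
        simp [kd, hpr]
    · rw [Finset.prod_eq_zero (Finset.mem_univ r) ?_]
      · by_cases hrp : r = p
        · subst hrp
          simp [kd, hrs, Ne.symm hrs]
        · have hpr' : ¬ p = r := fun h => hrp h.symm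
          by_cases hsp : s = p
          · subst hsp
            simp [kd, hrs, hpr']
          · have hps' : ¬ p = s := fun h => hsp h.symm
            simp [kd, hrs, hpr', hps']
      · by_cases h : r = p
        · simp [cnt, h, show ¬ p = s from fun hh => hrs (h.trans hh), gm3]
        · simp [cnt, h, hrs, gm1']
  · by_cases hpr : p = r
    · subst hpr
      by_cases hqs : q = s
      · subst hqs
        have h : ∀ i, (∫ t, t ^ (cnt p q p q i) ∂(gaussianReal 0 1)) = 1 := by
          intro i
          by_cases h1 : i = p
          · simp [cnt, h1, hpq, gm2]
          · by_cases h2 : i = q <;> simp [cnt, h1, h2, Ne.symm hpq, gm2, gm0]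
        rw [Finset.prod_congr rfl (fun i _ => h i), Finset.prod_const_one]
        simp [kd, hpq]
      · have hqp' : ¬ q = p := fun h => hpq h.symm
        have hsq' : ¬ s = q := fun h => hqs h.symm
        rw [Finset.prod_eq_zero (Finset.mem_univ s) ?_]
        · simp [kd, hpq, hqs, hqp']
        · by_cases h : s = p <;> simp [cnt, h, hsq', hpq, gm1', gm3]

    · by_cases hps : p = s
      · subst hps
        by_cases hqr : q = r
        · subst hqr
          have h : ∀ i, (∫ t, t ^ (cnt p q q p i) ∂(gaussianReal 0 1)) = 1 := by
            intro i
            by_cases h1 : i = p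
            · simp [cnt, h1, hpq, gm2]
            · by_cases h2 : i = q <;> simp [cnt, h1, h2, Ne.symm hpq, gm2, gm0]
          rw [Finset.prod_congr rfl (fun i _ => h i), Finset.prod_const_one]
          simp [kd, hpq]
        · have hrp' : ¬ r = p := fun h => hpr h.symm
          rw [Finset.prod_eq_zero (Finset.mem_univ r) ?_]
          · simp [kd, hpq, hpr, hqr, hrp']
          · have h2 : ¬ r = q := fun h => hqr h.symm
            simp [cnt, hrp', h2, gm1']
      · rw [Finset.prod_eq_zero (Finset.mem_univ p) ?_]
        · simp [kd, hpq, hpr, hps]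
        · simp [cnt, hpq, hpr, hps, gm1']

lemma kd_self {α : Type*} [DecidableEq α] (a : α) : kd a a = 1 := by simp [kd]

lemma kd_pair {α β : Type*} [DecidableEq α] [DecidableEq β] (a b : α) (c e : β) :
    kd (a, c) (b, e) = kd a b * kd c e := by
  by_cases h1 : a = b <;> by_cases h2 : c = e <;> simp [kd, h1, h2, Prod.ext_iff]

lemma sum_mul_kd {α : Type*} [Fintype α] [DecidableEq α] (f : α → ℝ) (a : α) :
    (∑ b, f b * kd a b) = f a := by
  simp [kd, mul_ite, mul_one, mul_zero, Finset.sum_ite_eq]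

lemma moment_four_pairs {α β : Type*} [Fintype α] [DecidableEq α] [Fintype β] [DecidableEq β]
    (a b a' b' : α) (d d' : β) :
    (∫ x : (α × β) → ℝ, x (a, d) * x (b, d) * (x (a', d') * x (b', d'))
        ∂(Measure.pi fun _ => gaussianReal 0 1))
      = kd a b * kd a' b' + kd d d' * (kd a a' * kd b b') + kd d d' * (kd a b' * kd b a') := by
  rw [moment_four]
  by_cases hdd : d = d'
  · subst hdd
    simp only [kd_pair, kd_self]
    ring
  · have h0 : kd d d' = 0 := by simp [kd, hdd]
    simp only [kd_pair, kd_self, h0]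
    ring

end GCNAux

/-- Theorem 3 (expectation formula): for `H^{(k)} = Ã^k X` with `Ã = A + I` and `X` an
`N × D` matrix of i.i.d. standard Gaussians,
`E[‖H^{(k)} H^{(k)ᵀ}‖_F²] = D Σ_{i,j} (D+1)((Ã^{2k})_{ij})² + (Ã^{2k})_{ii}(Ã^{2k})_{jj}`. -/
theorem expected_feature_correlation_gcn
    (N D k : ℕ) (hN : 0 < N) (hD : 0 < D) (hk : 0 < k)
    (A : Matrix (Fin N) (Fin N) ℝ) (hsymm : A.IsSymm)
    (hdiag : ∀ i, A i i = 0) (h01 : ∀ i j, A i j = 0 ∨ A i j = 1) :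
    (∫ x : (Fin N × Fin D) → ℝ,
        frobSq (((A + 1) ^ k * Matrix.of fun i j => x (i, j)) *
            ((A + 1) ^ k * Matrix.of fun i j => x (i, j))ᵀ)
        ∂(Measure.pi fun _ : Fin N × Fin D => gaussianReal 0 1)) =
      (D : ℝ) * ∑ i : Fin N, ∑ j : Fin N,
        (((D : ℝ) + 1) * (((A + 1) ^ (2 * k)) i j) ^ 2 +
          ((A + 1) ^ (2 * k)) i i * ((A + 1) ^ (2 * k)) j j) := by
  classical
  set B : Matrix (Fin N) (Fin N) ℝ := (A + 1) ^ k with hBdef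
  have hBsymm : ((A + 1) ^ k).IsSymm := (hsymm.add (Matrix.isSymm_one)).pow k
  have hB : ∀ a b, B a b = B b a := fun a b => (hBsymm.apply a b).symm
  have hM : ∀ i j, ((A + 1) ^ (2 * k)) i j = ∑ c, B i c * B j c := by
    intro i j
    rw [two_mul, pow_add, Matrix.mul_apply]
    simp only [← hBdef]
    exact Finset.sum_congr rfl fun c _ => by rw [hB c j]
  have hfun : (fun x : (Fin N × Fin D) → ℝ =>
      frobSq ((B * Matrix.of fun i j => x (i, j)) *
        (B * Matrix.of fun i j => x (i, j))ᵀ))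
      = fun x => ∑ i : Fin N, ∑ j : Fin N, ∑ d : Fin D, ∑ d' : Fin D, ∑ a : Fin N,
          ∑ a' : Fin N, ∑ b : Fin N, ∑ b' : Fin N,
          (B i a * B j b * (B i a' * B j b'))
            * (x (a, d) * x (b, d) * (x (a', d') * x (b', d'))) := by
    funext x
    simp only [frobSq, Matrix.mul_apply, Matrix.transpose_apply, Matrix.of_apply, pow_two,
      Finset.sum_mul_sum]
    refine Finset.sum_congr rfl fun i _ => Finset.sum_congr rfl fun j _ =>
      Finset.sum_congr rfl fun d _ => Finset.sum_congr rfl fun d' _ =>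
      Finset.sum_congr rfl fun a _ => Finset.sum_congr rfl fun a' _ =>
      Finset.sum_congr rfl fun b _ => Finset.sum_congr rfl fun b' _ => by ring
  rw [hfun]
  have hint : ∀ (c : ℝ) (p q r s : Fin N × Fin D),
      Integrable (fun x : (Fin N × Fin D) → ℝ => c * (x p * x q * (x r * x s)))
        (Measure.pi fun _ : Fin N × Fin D => gaussianReal 0 1) :=
    fun c p q r s => (GCNAux.integrable_four p q r s).const_mul c
  have step2 : (∫ x : (Fin N × Fin D) → ℝ,
        (∑ i : Fin N, ∑ j : Fin N, ∑ d : Fin D, ∑ d' : Fin D, ∑ a : Fin N,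
          ∑ a' : Fin N, ∑ b : Fin N, ∑ b' : Fin N,
          (B i a * B j b * (B i a' * B j b'))
            * (x (a, d) * x (b, d) * (x (a', d') * x (b', d'))))
        ∂(Measure.pi fun _ : Fin N × Fin D => gaussianReal 0 1))
      = ∑ i : Fin N, ∑ j : Fin N, ∑ d : Fin D, ∑ d' : Fin D, ∑ a : Fin N,
          ∑ a' : Fin N, ∑ b : Fin N, ∑ b' : Fin N,
          (B i a * B j b * (B i a' * B j b'))
            * (GCNAux.kd a b * GCNAux.kd a' b'
              + GCNAux.kd d d' * (GCNAux.kd a a' * GCNAux.kd b b')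
              + GCNAux.kd d d' * (GCNAux.kd a b' * GCNAux.kd b a')) := by
    rw [MeasureTheory.integral_finset_sum _ (fun _ _ => integrable_finset_sum _ (fun _ _ => integrable_finset_sum _ (fun _ _ => integrable_finset_sum _ (fun _ _ => integrable_finset_sum _ (fun _ _ => integrable_finset_sum _ (fun _ _ => integrable_finset_sum _ (fun _ _ => integrable_finset_sum _ (fun _ _ => hint _ _ _ _ _))))))))]
    refine Finset.sum_congr rfl fun i _ => ?_
    rw [MeasureTheory.integral_finset_sum _ (fun _ _ => integrable_finset_sum _ (fun _ _ => integrable_finset_sum _ (fun _ _ => integrable_finset_sum _ (fun _ _ => integrable_finset_sum _ (fun _ _ => integrable_finset_sum _ (fun _ _ => integrable_finset_sum _ (fun _ _ => hint _ _ _ _ _)))))))]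
    refine Finset.sum_congr rfl fun j _ => ?_
    rw [MeasureTheory.integral_finset_sum _ (fun _ _ => integrable_finset_sum _ (fun _ _ => integrable_finset_sum _ (fun _ _ => integrable_finset_sum _ (fun _ _ => integrable_finset_sum _ (fun _ _ => integrable_finset_sum _ (fun _ _ => hint _ _ _ _ _))))))]
    refine Finset.sum_congr rfl fun d _ => ?_
    rw [MeasureTheory.integral_finset_sum _ (fun _ _ => integrable_finset_sum _ (fun _ _ => integrable_finset_sum _ (fun _ _ => integrable_finset_sum _ (fun _ _ => integrable_finset_sum _ (fun _ _ => hint _ _ _ _ _)))))]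
    refine Finset.sum_congr rfl fun d' _ => ?_
    rw [MeasureTheory.integral_finset_sum _ (fun _ _ => integrable_finset_sum _ (fun _ _ => integrable_finset_sum _ (fun _ _ => integrable_finset_sum _ (fun _ _ => hint _ _ _ _ _))))]
    refine Finset.sum_congr rfl fun a _ => ?_
    rw [MeasureTheory.integral_finset_sum _ (fun _ _ => integrable_finset_sum _ (fun _ _ => integrable_finset_sum _ (fun _ _ => hint _ _ _ _ _)))]
    refine Finset.sum_congr rfl fun a' _ => ?_
    rw [MeasureTheory.integral_finset_sum _ (fun _ _ => integrable_finset_sum _ (fun _ _ => hint _ _ _ _ _))]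
    refine Finset.sum_congr rfl fun b _ => ?_
    rw [MeasureTheory.integral_finset_sum _ (fun _ _ => hint _ _ _ _ _)]
    refine Finset.sum_congr rfl fun b' _ => ?_
    rw [integral_const_mul, GCNAux.moment_four_pairs]
  rw [step2]
  -- collapse the Kronecker deltas
  have LA : ∀ i j : Fin N,
      (∑ d : Fin D, ∑ d' : Fin D, ∑ a : Fin N, ∑ a' : Fin N, ∑ b : Fin N, ∑ b' : Fin N,
        (B i a * B j b * (B i a' * B j b')) * (GCNAux.kd a b * GCNAux.kd a' b'))
      = (D : ℝ)^2 * ∑ a : Fin N, ∑ b : Fin N, (B i a * B j a) * (B i b * B j b) := by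
    intro i j
    have c1 : ∀ a a' b : Fin N,
        (∑ b' : Fin N, (B i a * B j b * (B i a' * B j b')) * (GCNAux.kd a b * GCNAux.kd a' b'))
        = (B i a * B j b * (B i a' * B j a')) * GCNAux.kd a b := by
      intro a a' b
      calc (∑ b' : Fin N, (B i a * B j b * (B i a' * B j b')) * (GCNAux.kd a b * GCNAux.kd a' b'))
          = ∑ b' : Fin N, (B i a * B j b * B i a' * GCNAux.kd a b * B j b') * GCNAux.kd a' b' :=
            Finset.sum_congr rfl fun b' _ => by ring
        _ = B i a * B j b * B i a' * GCNAux.kd a b * B j a' := GCNAux.sum_mul_kd _ a'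
        _ = (B i a * B j b * (B i a' * B j a')) * GCNAux.kd a b := by ring
    have c2 : ∀ a a' : Fin N,
        (∑ b : Fin N, (B i a * B j b * (B i a' * B j a')) * GCNAux.kd a b)
        = (B i a * B j a) * (B i a' * B j a') := by
      intro a a'
      calc (∑ b : Fin N, (B i a * B j b * (B i a' * B j a')) * GCNAux.kd a b)
          = ∑ b : Fin N, (B i a * B i a' * B j a' * B j b) * GCNAux.kd a b :=
            Finset.sum_congr rfl fun b _ => by ring
        _ = B i a * B i a' * B j a' * B j a := GCNAux.sum_mul_kd _ a
        _ = (B i a * B j a) * (B i a' * B j a') := by ring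
    calc (∑ d : Fin D, ∑ d' : Fin D, ∑ a : Fin N, ∑ a' : Fin N, ∑ b : Fin N, ∑ b' : Fin N,
            (B i a * B j b * (B i a' * B j b')) * (GCNAux.kd a b * GCNAux.kd a' b'))
        = ∑ d : Fin D, ∑ d' : Fin D, ∑ a : Fin N, ∑ a' : Fin N,
            (B i a * B j a) * (B i a' * B j a') := by
          refine Finset.sum_congr rfl fun d _ => Finset.sum_congr rfl fun d' _ =>
            Finset.sum_congr rfl fun a _ => Finset.sum_congr rfl fun a' _ => ?_
          rw [(Finset.sum_congr rfl fun b _ => c1 a a' b : _), c2 a a']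
      _ = (D : ℝ)^2 * ∑ a : Fin N, ∑ b : Fin N, (B i a * B j a) * (B i b * B j b) := by
          rw [Finset.sum_const, Finset.sum_const, Finset.card_univ, Fintype.card_fin,
            smul_smul, nsmul_eq_mul]
          push_cast
          ring
  have LB : ∀ i j : Fin N,
      (∑ d : Fin D, ∑ d' : Fin D, ∑ a : Fin N, ∑ a' : Fin N, ∑ b : Fin N, ∑ b' : Fin N,
        (B i a * B j b * (B i a' * B j b'))
          * (GCNAux.kd d d' * (GCNAux.kd a a' * GCNAux.kd b b')))
      = (D : ℝ) * ∑ a : Fin N, ∑ b : Fin N, (B i a * B i a) * (B j b * B j b) := by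
    intro i j
    have c1 : ∀ (d d' : Fin D) (a a' b : Fin N),
        (∑ b' : Fin N, (B i a * B j b * (B i a' * B j b'))
            * (GCNAux.kd d d' * (GCNAux.kd a a' * GCNAux.kd b b')))
        = (B i a * B j b * (B i a' * B j b)) * (GCNAux.kd d d' * GCNAux.kd a a') := by
      intro d d' a a' b
      calc (∑ b' : Fin N, (B i a * B j b * (B i a' * B j b'))
              * (GCNAux.kd d d' * (GCNAux.kd a a' * GCNAux.kd b b')))
          = ∑ b' : Fin N, (B i a * B j b * B i a' * GCNAux.kd d d' * GCNAux.kd a a' * B j b')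
              * GCNAux.kd b b' := Finset.sum_congr rfl fun b' _ => by ring
        _ = B i a * B j b * B i a' * GCNAux.kd d d' * GCNAux.kd a a' * B j b :=
            GCNAux.sum_mul_kd _ b
        _ = (B i a * B j b * (B i a' * B j b)) * (GCNAux.kd d d' * GCNAux.kd a a') := by ring
    have c2 : ∀ (d d' : Fin D) (a : Fin N),
        (∑ a' : Fin N, ∑ b : Fin N, (B i a * B j b * (B i a' * B j b))
            * (GCNAux.kd d d' * GCNAux.kd a a'))
        = ∑ b : Fin N, (B i a * B j b * (B i a * B j b)) * GCNAux.kd d d' := by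
      intro d d' a
      calc (∑ a' : Fin N, ∑ b : Fin N, (B i a * B j b * (B i a' * B j b))
              * (GCNAux.kd d d' * GCNAux.kd a a'))
          = ∑ a' : Fin N, (∑ b : Fin N, (B i a * B j b * (B i a' * B j b)) * GCNAux.kd d d')
              * GCNAux.kd a a' := by
            refine Finset.sum_congr rfl fun a' _ => ?_
            rw [Finset.sum_mul]
            exact Finset.sum_congr rfl fun b _ => by ring
        _ = ∑ b : Fin N, (B i a * B j b * (B i a * B j b)) * GCNAux.kd d d' :=
            GCNAux.sum_mul_kd _ a
    calc (∑ d : Fin D, ∑ d' : Fin D, ∑ a : Fin N, ∑ a' : Fin N, ∑ b : Fin N, ∑ b' : Fin N,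
            (B i a * B j b * (B i a' * B j b'))
              * (GCNAux.kd d d' * (GCNAux.kd a a' * GCNAux.kd b b')))
        = ∑ d : Fin D, ∑ d' : Fin D,
            (∑ a : Fin N, ∑ b : Fin N, (B i a * B j b * (B i a * B j b))) * GCNAux.kd d d' := by
          refine Finset.sum_congr rfl fun d _ => Finset.sum_congr rfl fun d' _ => ?_
          rw [Finset.sum_mul]
          refine Finset.sum_congr rfl fun a _ => ?_
          rw [Finset.sum_mul, ← c2 d d' a]
          refine Finset.sum_congr rfl fun a' _ => ?_
          exact Finset.sum_congr rfl fun b _ => c1 d d' a a' b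
      _ = ∑ d : Fin D, ∑ a : Fin N, ∑ b : Fin N, (B i a * B j b * (B i a * B j b)) := by
          refine Finset.sum_congr rfl fun d _ => ?_
          exact GCNAux.sum_mul_kd _ d
      _ = (D : ℝ) * ∑ a : Fin N, ∑ b : Fin N, (B i a * B i a) * (B j b * B j b) := by
          rw [Finset.sum_const, Finset.card_univ, Fintype.card_fin, nsmul_eq_mul]
          congr 1
          refine Finset.sum_congr rfl fun a _ => Finset.sum_congr rfl fun b _ => by ring
  have LC : ∀ i j : Fin N,
      (∑ d : Fin D, ∑ d' : Fin D, ∑ a : Fin N, ∑ a' : Fin N, ∑ b : Fin N, ∑ b' : Fin N,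
        (B i a * B j b * (B i a' * B j b'))
          * (GCNAux.kd d d' * (GCNAux.kd a b' * GCNAux.kd b a')))
      = (D : ℝ) * ∑ a : Fin N, ∑ b : Fin N, (B i a * B j a) * (B i b * B j b) := by
    intro i j
    have c1 : ∀ (d d' : Fin D) (a a' b : Fin N),
        (∑ b' : Fin N, (B i a * B j b * (B i a' * B j b'))
            * (GCNAux.kd d d' * (GCNAux.kd a b' * GCNAux.kd b a')))
        = (B i a * B j b * (B i a' * B j a)) * (GCNAux.kd d d' * GCNAux.kd b a') := by
      intro d d' a a' b
      calc (∑ b' : Fin N, (B i a * B j b * (B i a' * B j b'))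
              * (GCNAux.kd d d' * (GCNAux.kd a b' * GCNAux.kd b a')))
          = ∑ b' : Fin N, (B i a * B j b * B i a' * GCNAux.kd d d' * GCNAux.kd b a' * B j b')
              * GCNAux.kd a b' := Finset.sum_congr rfl fun b' _ => by ring
        _ = B i a * B j b * B i a' * GCNAux.kd d d' * GCNAux.kd b a' * B j a :=
            GCNAux.sum_mul_kd _ a
        _ = (B i a * B j b * (B i a' * B j a)) * (GCNAux.kd d d' * GCNAux.kd b a') := by ring
    have c2 : ∀ (d d' : Fin D) (a b : Fin N),
        (∑ a' : Fin N, (B i a * B j b * (B i a' * B j a))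
            * (GCNAux.kd d d' * GCNAux.kd b a'))
        = (B i a * B j b * (B i b * B j a)) * GCNAux.kd d d' := by
      intro d d' a b
      calc (∑ a' : Fin N, (B i a * B j b * (B i a' * B j a))
              * (GCNAux.kd d d' * GCNAux.kd b a'))
          = ∑ a' : Fin N, (B i a * B j b * B j a * GCNAux.kd d d' * B i a') * GCNAux.kd b a' :=
            Finset.sum_congr rfl fun a' _ => by ring
        _ = B i a * B j b * B j a * GCNAux.kd d d' * B i b := GCNAux.sum_mul_kd _ b
        _ = (B i a * B j b * (B i b * B j a)) * GCNAux.kd d d' := by ring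
    calc (∑ d : Fin D, ∑ d' : Fin D, ∑ a : Fin N, ∑ a' : Fin N, ∑ b : Fin N, ∑ b' : Fin N,
            (B i a * B j b * (B i a' * B j b'))
              * (GCNAux.kd d d' * (GCNAux.kd a b' * GCNAux.kd b a')))
        = ∑ d : Fin D, ∑ d' : Fin D,
            (∑ a : Fin N, ∑ b : Fin N, (B i a * B j b * (B i b * B j a))) * GCNAux.kd d d' := by
          refine Finset.sum_congr rfl fun d _ => Finset.sum_congr rfl fun d' _ => ?_
          rw [Finset.sum_mul]
          refine Finset.sum_congr rfl fun a _ => ?_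
          rw [Finset.sum_mul]
          -- goal: ∑ a' ∑ b ∑ b' ... = ∑ b, (...) * kd d d'
          rw [Finset.sum_comm]
          refine Finset.sum_congr rfl fun b _ => ?_
          rw [(Finset.sum_congr rfl fun a' _ => c1 d d' a a' b : _), c2 d d' a b]
      _ = ∑ d : Fin D, ∑ a : Fin N, ∑ b : Fin N, (B i a * B j b * (B i b * B j a)) := by
          refine Finset.sum_congr rfl fun d _ => ?_
          exact GCNAux.sum_mul_kd _ d
      _ = (D : ℝ) * ∑ a : Fin N, ∑ b : Fin N, (B i a * B j a) * (B i b * B j b) := by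
          rw [Finset.sum_const, Finset.card_univ, Fintype.card_fin, nsmul_eq_mul]
          congr 1
          refine Finset.sum_congr rfl fun a _ => Finset.sum_congr rfl fun b _ => by ring
  have hU : ∀ i j : Fin N, (∑ a : Fin N, ∑ b : Fin N, (B i a * B j a) * (B i b * B j b))
      = (((A + 1) ^ (2 * k)) i j)^2 := by
    intro i j
    rw [hM i j, pow_two, Finset.sum_mul_sum]
  have hV : ∀ i j : Fin N, (∑ a : Fin N, ∑ b : Fin N, (B i a * B i a) * (B j b * B j b))
      = ((A + 1) ^ (2 * k)) i i * ((A + 1) ^ (2 * k)) j j := by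
    intro i j
    rw [hM i i, hM j j, Finset.sum_mul_sum]
  calc (∑ i : Fin N, ∑ j : Fin N, ∑ d : Fin D, ∑ d' : Fin D, ∑ a : Fin N,
          ∑ a' : Fin N, ∑ b : Fin N, ∑ b' : Fin N,
          (B i a * B j b * (B i a' * B j b'))
            * (GCNAux.kd a b * GCNAux.kd a' b'
              + GCNAux.kd d d' * (GCNAux.kd a a' * GCNAux.kd b b')
              + GCNAux.kd d d' * (GCNAux.kd a b' * GCNAux.kd b a')))
      = ∑ i : Fin N, ∑ j : Fin N,
          (((D : ℝ)^2 * ∑ a : Fin N, ∑ b : Fin N, (B i a * B j a) * (B i b * B j b))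
            + ((D : ℝ) * ∑ a : Fin N, ∑ b : Fin N, (B i a * B i a) * (B j b * B j b))
            + ((D : ℝ) * ∑ a : Fin N, ∑ b : Fin N, (B i a * B j a) * (B i b * B j b))) := by
        refine Finset.sum_congr rfl fun i _ => Finset.sum_congr rfl fun j _ => ?_
        simp only [mul_add, Finset.sum_add_distrib]
        rw [LA i j, LB i j, LC i j]
    _ = (D : ℝ) * ∑ i : Fin N, ∑ j : Fin N,
          (((D : ℝ) + 1) * (((A + 1) ^ (2 * k)) i j) ^ 2 +
            ((A + 1) ^ (2 * k)) i i * ((A + 1) ^ (2 * k)) j j) := by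
        rw [Finset.mul_sum]
        refine Finset.sum_congr rfl fun i _ => ?_
        rw [Finset.mul_sum]
        refine Finset.sum_congr rfl fun j _ => ?_
        rw [← hU i j, ← hV i j]
        ring
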